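/- arXiv:1708.02080 — 2 statements merged into one kernel-verified Lean document; each statement's English description precedes it below -/
import Mathlib

section
/- Let K be a field, let V be a nonzero K-vector space, and let S be a nilpotent (non-unital) subalgebra of the algebra End_K(V) of all K-linear transformations of V. Then there exists a nonzero vector w ∈ V such that s(w) = 0 for every s ∈ S; equivalently, there exists a 1-dimensional subspace W ⊆ V with S(W) = 0. -/
/-- A subset `S` of a (possibly non-unital) ring is nilpotent if there is `n ≥ 1`
such that every product of `n` elements of `S` is zero. A product of the `n ≥ 1`
elements `a, l.get 0, l.get 1, ...` (with `l.length + 1 = n`) is `l.foldl (· * ·) a`. -/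
def IsNilpotentSet {R : Type*} [NonUnitalRing R] (S : Set R) : Prop :=
  ∃ n : ℕ, 1 ≤ n ∧ ∀ (a : R) (l : List R), a ∈ S → (∀ y ∈ l, y ∈ S) →
    l.length + 1 = n → l.foldl (· * ·) a = 0

/-- Let `K` be a field, `V` a nonzero `K`-vector space and `S` a nilpotent
(non-unital) subalgebra of `End_K(V)`. Then there exists a nonzero vector `w` with
`s w = 0` for all `s ∈ S` (equivalently, a one-dimensional subspace annihilated by `S`). -/
theorem exists_nonzero_vector_annihilated_of_nilpotent_subalgebra
    {K V : Type*} [Field K] [AddCommGroup V] [Module K V] [Nontrivial V]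
    (S : NonUnitalSubalgebra K (Module.End K V))
    (hS : IsNilpotentSet (S : Set (Module.End K V))) :
    ∃ w : V, w ≠ 0 ∧ ∀ s ∈ S, s w = 0 := by
  obtain ⟨n, hn1, hn⟩ := hS
  induction n with
  | zero => omega
  | succ n ih =>
    rcases Nat.lt_or_ge 1 (n + 1) with h1 | h1
    · by_cases hall : ∀ (a : Module.End K V) (l : List (Module.End K V)),
        a ∈ S → (∀ y ∈ l, y ∈ S) → l.length + 1 = n → l.foldl (· * ·) a = 0
      · exact ih (by omega) hall
      · push_neg at hall
        obtain ⟨a, l, ha, hl, hlen, hne⟩ := hall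
        obtain ⟨v, hv⟩ : ∃ v, (l.foldl (· * ·) a) v ≠ 0 := by
          by_contra h; push_neg at h
          exact hne (LinearMap.ext h)
        refine ⟨_, hv, fun s hs => ?_⟩
        have key := hn s (a :: l) hs
          (by
            intro y hy
            rcases List.mem_cons.1 hy with rfl | hy
            · exact ha
            · exact hl y hy)
          (by simp [hlen])
        have hfold : (a :: l).foldl (· * ·) s = s * l.foldl (· * ·) a := by
          simp only [List.foldl_cons]
          exact List.foldl_assoc
        rw [hfold] at key
        have := congrArg (fun f => f v) key
        simpa [Module.End.mul_apply] using this
    · obtain ⟨v, hv⟩ := exists_ne (0 : V)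
      refine ⟨v, hv, fun s hs => ?_⟩
      have h0 := hn s [] hs (by simp) (by simp; omega)
      simp only [List.foldl_nil] at h0
      rw [h0]; rfl
end

section
/- Let K be a field, let V be a nonzero K-vector space, and let s ∈ End_K(V) be a nilpotent linear transformation (s^m = 0 for some m ≥ 1). Then s is strictly triangularizable: there exist a well-ordered index set I and a basis (b_i)_{i ∈ I} of V such that for every i ∈ I, s(b_i) lies in the linear span of {b_j : j < i}. -/
universe u v

open Submodule

noncomputable def ntChain {K : Type u} {V : Type v} [Field K] [AddCommGroup V] [Module K V]
    (s : Module.End K V) :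
    (k : ℕ) → Σ' c : Set V, LinearIndependent K (fun x : c => (x : V)) ∧
      Submodule.span K c = LinearMap.ker (s ^ k)
  | 0 => ⟨∅, linearIndependent_empty K V, by rw [pow_zero, Submodule.span_empty]; exact (LinearMap.ker_id).symm⟩
  | k + 1 =>
    ⟨LinearIndepOn.extend (v := id) (ntChain s k).2.1
        (show (ntChain s k).1 ⊆ ↑(LinearMap.ker (s ^ (k + 1))) from by
          intro x hx
          have h1 : x ∈ Submodule.span K (ntChain s k).1 := Submodule.subset_span hx
          rw [(ntChain s k).2.2] at h1
          have : LinearMap.ker (s ^ k) ≤ LinearMap.ker (s ^ (k + 1)) := by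
            intro y hy
            simp only [LinearMap.mem_ker] at hy ⊢
            rw [pow_succ', Module.End.mul_apply, hy, map_zero]
          exact this h1),
      LinearIndepOn.linearIndepOn_extend (v := id) (ntChain s k).2.1 _, by
        rw [LinearIndepOn.span_extend_eq_span (ntChain s k).2.1]
        simp⟩

theorem ntChain_sub {K : Type u} {V : Type v} [Field K] [AddCommGroup V] [Module K V]
    (s : Module.End K V) (k : ℕ) : (ntChain s k).1 ⊆ ↑(LinearMap.ker (s ^ (k + 1))) := by
  intro x hx
  have h1 : x ∈ Submodule.span K (ntChain s k).1 := Submodule.subset_span hx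
  rw [(ntChain s k).2.2] at h1
  have h2 : LinearMap.ker (s ^ k) ≤ LinearMap.ker (s ^ (k + 1)) := by
    intro y hy
    simp only [LinearMap.mem_ker] at hy ⊢
    rw [pow_succ', Module.End.mul_apply, hy, map_zero]
  exact h2 h1

theorem ntChain_subset_succ {K : Type u} {V : Type v} [Field K] [AddCommGroup V] [Module K V]
    (s : Module.End K V) (k : ℕ) : (ntChain s k).1 ⊆ (ntChain s (k + 1)).1 := by
  exact LinearIndepOn.subset_extend (v := id) (ntChain s k).2.1 (ntChain_sub s k)

theorem ntChain_mono {K : Type u} {V : Type v} [Field K] [AddCommGroup V] [Module K V]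
    (s : Module.End K V) {k l : ℕ} (h : k ≤ l) : (ntChain s k).1 ⊆ (ntChain s l).1 := by
  induction l with
  | zero => rw [Nat.le_zero.mp h]
  | succ n ih =>
    rcases Nat.lt_or_ge k (n + 1) with h' | h'
    · exact (ih (Nat.lt_succ_iff.mp h')).trans (ntChain_subset_succ s n)
    · have : k = n + 1 := le_antisymm h h'
      subst this; exact fun _ hx => hx

/-- Let `K` be a field, `V` a nonzero `K`-vector space, and `s` a nilpotent linear
transformation of `V`. Then `s` is strictly triangularizable: there exist a
well-ordered index set `I` and a basis `b : I → V` of `V` such that for every `i`,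
`s (b i)` lies in the span of the basis vectors `b j` with `j < i`. -/
theorem nilpotent_endomorphism_strictly_triangularizable
    {K : Type u} {V : Type v} [Field K] [AddCommGroup V] [Module K V] [Nontrivial V]
    (s : Module.End K V) (hs : ∃ m : ℕ, 1 ≤ m ∧ s ^ m = 0) :
    ∃ (I : Type v) (r : I → I → Prop) (_ : IsWellOrder I r) (b : Module.Basis I K V),
      ∀ i : I, s (b i) ∈ Submodule.span K (b '' {j : I | r j i}) := by
  classical
  obtain ⟨m, hm1, hm0⟩ := hs
  set C : Set V := (ntChain s m).1 with hC
  have hspanC : Submodule.span K C = ⊤ := by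
    rw [(ntChain s m).2.2, hm0, LinearMap.ker_zero]
  have hliC : LinearIndependent K (fun x : C => (x : V)) := (ntChain s m).2.1
  -- the basis
  let b : Module.Basis C K V := Module.Basis.mk hliC (by rw [← hspanC]; simp [Subtype.range_coe])
  have hb : ∀ i : C, b i = (i : V) := fun i => by simp [b]
  -- level function
  have hex : ∀ i : C, ∃ k, (i : V) ∈ (ntChain s k).1 := fun i => ⟨m, i.2⟩
  let lvl : C → ℕ := fun i => Nat.find (hex i)
  have hlvl_mem : ∀ i : C, (i : V) ∈ (ntChain s (lvl i)).1 := fun i => Nat.find_spec (hex i)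
  have hlvl_le : ∀ (i : C) (k : ℕ), (i : V) ∈ (ntChain s k).1 → lvl i ≤ k :=
    fun i k hk => Nat.find_le hk
  have hlvl_pos : ∀ i : C, 1 ≤ lvl i := by
    intro i
    by_contra h
    have h0 : lvl i = 0 := by omega
    have := hlvl_mem i
    rw [h0] at this
    exact absurd this (by simp [ntChain])
  -- the relation
  let f : C → ℕ × V := fun i => (lvl i, (i : V))
  let r : C → C → Prop := fun i j => Prod.Lex (· < ·) WellOrderingRel (f i) (f j)
  have hf : Function.Injective f := fun i j h => Subtype.ext (congrArg Prod.snd h)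
  have hwo : IsWellOrder C r :=
    (RelEmbedding.mk ⟨f, hf⟩ (fun {a b} => Iff.rfl)).isWellOrder
  refine ⟨C, r, hwo, b, ?_⟩
  intro i
  rw [hb i]
  have hle : lvl i ≤ m := hlvl_le i m i.2
  -- s i ∈ ker (s ^ (lvl i - 1)) = span (ntChain s (lvl i - 1))
  have hmem : s (i : V) ∈ Submodule.span K (ntChain s (lvl i - 1)).1 := by
    rw [(ntChain s (lvl i - 1)).2.2]
    have hi : (i : V) ∈ LinearMap.ker (s ^ lvl i) := by
      rw [← (ntChain s (lvl i)).2.2]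
      exact Submodule.subset_span (hlvl_mem i)
    simp only [LinearMap.mem_ker] at hi ⊢
    have : s ^ lvl i = s ^ (lvl i - 1) * s := by
      rw [← pow_succ]
      congr 1
      exact (Nat.succ_pred_eq_of_pos (hlvl_pos i)).symm
    rw [this, Module.End.mul_apply] at hi
    exact hi
  refine Submodule.span_mono ?_ hmem
  intro x hx
  have hxC : x ∈ C := ntChain_mono s (le_trans (Nat.sub_le _ _) hle) hx
  refine ⟨⟨x, hxC⟩, ?_, hb _⟩
  show r ⟨x, hxC⟩ i
  have : lvl ⟨x, hxC⟩ ≤ lvl i - 1 := hlvl_le _ _ hx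
  have h2 := hlvl_pos i
  exact Prod.Lex.left _ _ (by omega)
end
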